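/- arXiv:math/0610684 — 3 statements merged into one kernel-verified Lean document; each statement's English description precedes it below -/
import Mathlib

section
/- For every positive integer m and every n ≥ 1, the number of sublattices of index m in ℤ^n equals the sum over all factorizations m = d₁·d₂⋯dₙ (ordered tuples of positive integers) of d₁^0·d₂^1⋯dₙ^{n-1}. -/
open Finset

/-- RHS: sum over ordered factorizations. -/
noncomputable def R (n m : ℕ) : ℕ :=
  ∑ d ∈ (Fintype.piFinset fun _ : Fin n => m.divisors).filter
      (fun d => ∏ i, d i = m), ∏ i, (d i) ^ (i : ℕ)

lemma filter_eq_of_dvd {n m k : ℕ} (hm : m ≠ 0) (hk : k ∣ m) :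
    (Fintype.piFinset fun _ : Fin n => m.divisors).filter (fun d => ∏ i, d i = k) =
    (Fintype.piFinset fun _ : Fin n => k.divisors).filter (fun d => ∏ i, d i = k) := by
  have hk0 : k ≠ 0 := fun h => hm (by simpa [h] using hk)
  ext d
  simp only [mem_filter, Fintype.mem_piFinset, Nat.mem_divisors]
  constructor
  · rintro ⟨_, hp⟩
    refine ⟨fun i => ⟨hp ▸ Finset.dvd_prod_of_mem d (mem_univ i), hk0⟩, hp⟩
  · rintro ⟨h, hp⟩
    exact ⟨fun i => ⟨(h i).1.trans hk, hm⟩, hp⟩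

lemma R_one (m : ℕ) (hm : 0 < m) : R 1 m = 1 := by
  have : (Fintype.piFinset fun _ : Fin 1 => m.divisors).filter (fun d => ∏ i, d i = m)
      = {fun _ => m} := by
    ext d
    simp only [mem_filter, Fintype.mem_piFinset, Nat.mem_divisors, mem_singleton,
      Fin.prod_univ_one]
    constructor
    · rintro ⟨_, hp⟩
      funext i
      have : i = 0 := Subsingleton.elim _ _
      rw [this, hp]
    · rintro rfl
      exact ⟨fun i => ⟨dvd_rfl, hm.ne'⟩, rfl⟩
  rw [R, this, sum_singleton, Fin.prod_univ_one]
  simp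

lemma R_succ (n m : ℕ) (hm : 0 < m) :
    R (n + 1) m = ∑ e ∈ m.divisors, e * R n e := by
  classical
  -- reindex by (d 0, Fin.tail d)
  have key : R (n + 1) m =
      ∑ p ∈ (m.divisors ×ˢ Fintype.piFinset fun _ : Fin n => m.divisors).filter
          (fun p => p.1 * ∏ i, p.2 i = m),
        ∏ i : Fin n, (p.2 i) ^ ((i : ℕ) + 1) := by
    rw [R]
    refine Finset.sum_nbij' (fun d => (d 0, Fin.tail d)) (fun p => Fin.cons p.1 p.2)
      ?_ ?_ ?_ ?_ ?_
    · intro d hd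
      simp only [mem_filter, Fintype.mem_piFinset, mem_product] at hd ⊢
      refine ⟨⟨hd.1 0, fun i => hd.1 i.succ⟩, ?_⟩
      rw [← hd.2, Fin.prod_univ_succ]
      rfl
    · intro p hp
      simp only [mem_filter, Fintype.mem_piFinset, mem_product] at hp ⊢
      refine ⟨fun i => ?_, ?_⟩
      · refine Fin.cases ?_ ?_ i
        · exact hp.1.1
        · exact fun j => hp.1.2 j
      · rw [Fin.prod_univ_succ, Fin.cons_zero]
        simpa using hp.2
    · intro d _; exact Fin.cons_self_tail d
    · intro p _; simp [Fin.tail_cons]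
    · intro d hd
      simp only [mem_filter] at hd
      rw [Fin.prod_univ_succ]
      simp only [Fin.val_zero, pow_zero, one_mul]
      apply Finset.prod_congr rfl
      intro i _
      rfl
  rw [key]
  rw [Finset.sum_filter, Finset.sum_product]
  have step : ∀ a ∈ m.divisors,
      (∑ d ∈ Fintype.piFinset fun _ : Fin n => m.divisors,
        if a * ∏ i, d i = m then ∏ i : Fin n, (d i) ^ ((i : ℕ) + 1) else 0)
      = (m / a) * R n (m / a) := by
    intro a ha
    rw [Nat.mem_divisors] at ha
    have ha0 : a ≠ 0 := fun h => ha.2 (by simpa [h] using ha.1)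
    rw [← Finset.sum_filter]
    have hcond : ∀ d : Fin n → ℕ, (a * ∏ i, d i = m) ↔ (∏ i, d i = m / a) := by
      intro d
      obtain ⟨c, rfl⟩ := ha.1
      rw [Nat.mul_div_cancel_left c (Nat.pos_of_ne_zero ha0)]
      exact ⟨fun h => Nat.eq_of_mul_eq_mul_left (Nat.pos_of_ne_zero ha0) h,
        fun h => by rw [h]⟩
    rw [Finset.filter_congr (fun d _ => by rw [hcond d]),
      filter_eq_of_dvd ha.2 (Nat.div_dvd_of_dvd ha.1), R, Finset.mul_sum]
    apply Finset.sum_congr rfl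
    intro d hd
    simp only [mem_filter] at hd
    rw [← hd.2, ← Finset.prod_mul_distrib]
    apply Finset.prod_congr rfl
    intro i _
    ring
  rw [Finset.sum_congr rfl step]
  exact Nat.sum_div_divisors m (fun e => e * R n e)



open AddSubgroup

lemma exists_nat_zmultiples (H : AddSubgroup ℤ) : ∃ d : ℕ, H = zmultiples (d : ℤ) := by
  obtain ⟨a, ha⟩ := Int.subgroup_cyclic H
  refine ⟨a.natAbs, ?_⟩
  rw [ha, ← zmultiples_eq_closure, Int.zmultiples_natAbs]

lemma card_index_int (m : ℕ) (hm : 0 < m) :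
    Nat.card {H : AddSubgroup ℤ // H.index = m} = 1 := by
  rw [Nat.card_eq_one_iff_unique]
  constructor
  · constructor
    rintro ⟨H, hH⟩ ⟨K, hK⟩
    obtain ⟨d, rfl⟩ := exists_nat_zmultiples H
    obtain ⟨e, rfl⟩ := exists_nat_zmultiples K
    rw [Int.index_zmultiples, Int.natAbs_natCast] at hH hK
    subst hH
    have : e = d := hK
    subst this
    rfl
  · exact ⟨⟨zmultiples (m : ℤ), by rw [Int.index_zmultiples, Int.natAbs_natCast]⟩⟩

/-- Transport the count of finite-index subgroups along an `AddEquiv`. -/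
lemma card_index_congr {G G' : Type*} [AddGroup G] [AddGroup G'] (e : G ≃+ G') (m : ℕ) :
    Nat.card {H : AddSubgroup G // H.index = m} =
      Nat.card {H : AddSubgroup G' // H.index = m} := by
  apply Nat.card_congr
  have hidx : ∀ (H : AddSubgroup G'), (H.comap e.toAddMonoidHom).index = H.index :=
    fun H => AddSubgroup.index_comap_of_surjective H e.surjective
  have hidx' : ∀ (H : AddSubgroup G), (H.comap e.symm.toAddMonoidHom).index = H.index :=
    fun H => AddSubgroup.index_comap_of_surjective H e.symm.surjective
  refine ⟨fun H => ⟨H.1.comap e.symm.toAddMonoidHom, by rw [hidx', H.2]⟩,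
    fun H => ⟨H.1.comap e.toAddMonoidHom, by rw [hidx, H.2]⟩, ?_, ?_⟩
  · rintro ⟨H, hH⟩
    ext x
    simp
  · rintro ⟨H, hH⟩
    ext x
    simp


open AddSubgroup

lemma exists_nat_zmultiples' (H : AddSubgroup ℤ) : ∃ d : ℕ, H = zmultiples (d : ℤ) := by
  obtain ⟨a, ha⟩ := Int.subgroup_cyclic H
  refine ⟨a.natAbs, ?_⟩
  rw [ha, ← zmultiples_eq_closure, Int.zmultiples_natAbs]

variable {A : Type*} [AddCommGroup A]

local notation "inl" => AddMonoidHom.inl A ℤ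
local notation "snd" => AddMonoidHom.snd A ℤ

/-- Index formula: if the image of `H` under the second projection is `dℤ`,
then `[A × ℤ : H] = [A : H ∩ A] * d`. -/
lemma index_eq_of_map_snd {H : AddSubgroup (A × ℤ)} {d : ℕ}
    (hd : H.map snd = zmultiples (d : ℤ)) :
    H.index = (H.comap inl).index * d := by
  set K : AddSubgroup (A × ℤ) := (zmultiples (d : ℤ)).comap snd with hK
  have hHK : H ≤ K := by
    intro x hx
    have : x.2 ∈ H.map snd := ⟨x, hx, rfl⟩
    rw [hd] at this
    exact this
  have hsnd_surj : Function.Surjective (snd : A × ℤ →+ ℤ) := fun k => ⟨(0, k), rfl⟩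
  have hKindex : K.index = d := by
    rw [hK, AddSubgroup.index_comap_of_surjective _ hsnd_surj, Int.index_zmultiples,
      Int.natAbs_natCast]
  -- the homomorphism A →+ K ⧸ H'
  set H' : AddSubgroup K := H.addSubgroupOf K with hH'
  have hmem0 : ∀ a : A, ((a, (0:ℤ)) : A × ℤ) ∈ K := fun a => mem_comap.2 (by simpa using zero_mem (zmultiples (d:ℤ)))
  set ψ : A →+ K :=
    { toFun := fun a => ⟨(a, 0), hmem0 a⟩
      map_zero' := rfl
      map_add' := fun a b => by ext <;> simp } with hψ
  set φ : A →+ K ⧸ H' := (QuotientAddGroup.mk' H').comp ψ with hφ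
  have hφ_surj : Function.Surjective φ := by
    rintro q
    induction q using QuotientAddGroup.induction_on with
    | H z =>
      obtain ⟨⟨x, k⟩, hz⟩ := z
      have hk : k ∈ H.map snd := by rw [hd]; exact hz
      obtain ⟨⟨b, k'⟩, hbH, hk'⟩ := hk
      simp only [AddMonoidHom.coe_snd] at hk'
      subst hk'
      refine ⟨x - b, ?_⟩
      rw [hφ]
      simp only [AddMonoidHom.comp_apply, QuotientAddGroup.mk'_apply]
      rw [QuotientAddGroup.eq]
      refine (mem_addSubgroupOf).2 ?_
      simp only [hψ, AddMonoidHom.coe_mk, ZeroHom.coe_mk, NegMemClass.coe_neg,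
        AddSubgroup.coe_add]
      have heq : -((x - b, (0:ℤ)) : A × ℤ) + (x, k') = (b, k') := by
        ext <;> simp
      show -((x - b, (0:ℤ)) : A × ℤ) + (x, k') ∈ H
      rw [heq]
      exact hbH
  have hφ_ker : φ.ker = H.comap inl := by
    ext a
    rw [hφ, AddMonoidHom.mem_ker, AddMonoidHom.comp_apply, QuotientAddGroup.mk'_apply,
      QuotientAddGroup.eq_zero_iff, mem_addSubgroupOf]
    rfl
  have h1 : H.relIndex K = (H.comap inl).index := by
    rw [AddSubgroup.relIndex, AddSubgroup.index_eq_card, AddSubgroup.index_eq_card,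
      ← hφ_ker]
    exact (Nat.card_congr (QuotientAddGroup.quotientKerEquivOfSurjective φ hφ_surj).toEquiv).symm
  rw [← AddSubgroup.relIndex_mul_index hHK, h1, hKindex]

/-- The subgroup of `A × ℤ` built from `H₀`, a lift `a`, and a step `d`. -/
def Bgrp (H₀ : AddSubgroup A) (a : A) (d : ℤ) : AddSubgroup (A × ℤ) :=
  (H₀.map inl) ⊔ zmultiples ((a, d) : A × ℤ)

lemma mem_Bgrp {H₀ : AddSubgroup A} {a x : A} {d k : ℤ} :
    (x, k) ∈ Bgrp H₀ a d ↔ ∃ t : ℤ, k = t * d ∧ x - t • a ∈ H₀ := by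
  rw [Bgrp, AddSubgroup.mem_sup]
  constructor
  · rintro ⟨y, hy, z, hz, hyz⟩
    obtain ⟨b, hb, rfl⟩ := hy
    obtain ⟨t, rfl⟩ := mem_zmultiples_iff.1 hz
    refine ⟨t, ?_, ?_⟩
    · have := congrArg Prod.snd hyz
      simpa [mul_comm] using this.symm
    · have := congrArg Prod.fst hyz
      simp only [Prod.fst_add] at this
      have hx : x = b + t • a := by
        rw [← this]; rfl
      rw [hx]
      simpa using hb
  · rintro ⟨t, rfl, hx⟩
    refine ⟨((x - t • a, 0) : A × ℤ), ⟨x - t • a, hx, rfl⟩, t • ((a, d) : A × ℤ),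
      zsmul_mem (mem_zmultiples _) t, ?_⟩
    ext <;> simp [mul_comm]

lemma Bgrp_congr {H₀ : AddSubgroup A} {a a' : A} {d : ℤ} (h : a - a' ∈ H₀) :
    Bgrp H₀ a d = Bgrp H₀ a' d := by
  ext ⟨x, k⟩
  rw [mem_Bgrp, mem_Bgrp]
  constructor
  · rintro ⟨t, rfl, hx⟩
    refine ⟨t, rfl, ?_⟩
    have : x - t • a' = (x - t • a) + t • (a - a') := by rw [smul_sub]; abel
    rw [this]
    exact add_mem hx (zsmul_mem h t)
  · rintro ⟨t, rfl, hx⟩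
    refine ⟨t, rfl, ?_⟩
    have : x - t • a = (x - t • a') - t • (a - a') := by rw [smul_sub]; abel
    rw [this]
    exact sub_mem hx (zsmul_mem h t)

/-- Any finite-index subgroup is recovered from its data. -/
lemma eq_Bgrp {H : AddSubgroup (A × ℤ)} {d : ℕ} {a : A}
    (hd : H.map snd = zmultiples (d : ℤ)) (ha : ((a, (d : ℤ)) : A × ℤ) ∈ H) :
    H = Bgrp (H.comap inl) a d := by
  ext ⟨x, k⟩
  rw [mem_Bgrp]
  constructor
  · intro hx
    have hk : k ∈ zmultiples (d : ℤ) := by rw [← hd]; exact ⟨(x, k), hx, rfl⟩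
    obtain ⟨t, rfl⟩ := mem_zmultiples_iff.1 hk
    refine ⟨t, by simp [mul_comm], ?_⟩
    have : ((x - t • a, (0:ℤ)) : A × ℤ) ∈ H := by
      have h2 : ((x, t • (d:ℤ)) : A × ℤ) - t • ((a, (d:ℤ)) : A × ℤ) = (x - t • a, 0) := by
        ext <;> simp
      rw [← h2]
      exact sub_mem hx (zsmul_mem ha t)
    exact mem_comap.2 this
  · rintro ⟨t, rfl, hx⟩
    have h2 : ((x, t * (d:ℤ)) : A × ℤ) = ((x - t • a, (0:ℤ)) : A × ℤ) + t • ((a, (d:ℤ))) := by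
      ext <;> simp [mul_comm]
    rw [h2]
    exact add_mem (mem_comap.1 hx) (zsmul_mem ha t)

lemma map_snd_Bgrp (H₀ : AddSubgroup A) (a : A) (d : ℕ) :
    (Bgrp H₀ a (d : ℤ)).map snd = zmultiples (d : ℤ) := by
  ext k
  constructor
  · rintro ⟨⟨x, k⟩, hx, rfl⟩
    obtain ⟨t, rfl, -⟩ := mem_Bgrp.1 hx
    exact mem_zmultiples_iff.2 ⟨t, by simp [mul_comm]⟩
  · intro hk
    obtain ⟨t, rfl⟩ := mem_zmultiples_iff.1 hk
    exact ⟨(t • a, t • (d:ℤ)), mem_Bgrp.2 ⟨t, by simp [mul_comm], by simpa using zero_mem H₀⟩, rfl⟩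

lemma comap_inl_Bgrp (H₀ : AddSubgroup A) (a : A) {d : ℕ} (hd : d ≠ 0) :
    (Bgrp H₀ a (d : ℤ)).comap inl = H₀ := by
  ext x
  rw [mem_comap]
  show ((x, (0:ℤ)) : A × ℤ) ∈ _ ↔ _
  rw [mem_Bgrp]
  constructor
  · rintro ⟨t, ht, hx⟩
    have ht0 : t = 0 := by
      rcases mul_eq_zero.1 ht.symm with h | h
      · exact h
      · exact absurd h (by exact_mod_cast hd)
    subst ht0
    simpa using hx
  · intro hx
    exact ⟨0, by simp, by simpa using hx⟩

lemma mem_Bgrp_self {H₀ : AddSubgroup A} {a a' : A} {d : ℕ} (hd : d ≠ 0) :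
    ((a', (d : ℤ)) : A × ℤ) ∈ Bgrp H₀ a (d : ℤ) ↔ a' - a ∈ H₀ := by
  rw [mem_Bgrp]
  constructor
  · rintro ⟨t, ht, hx⟩
    have ht1 : t = 1 := by
      have hd' : (d : ℤ) ≠ 0 := by exact_mod_cast hd
      have := ht
      nlinarith [mul_left_cancel₀ hd' (show (d:ℤ) * 1 = (d:ℤ) * t by rw [mul_one, mul_comm]; exact ht)]
    subst ht1
    simpa using hx
  · intro h
    exact ⟨1, by simp, by simpa using h⟩

variable (m : ℕ)

/-- The subgroup associated to `(H₀, q)`, lifted over the quotient. -/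
noncomputable def PsiSub (H₀ : AddSubgroup A) (q : A ⧸ H₀) : AddSubgroup (A × ℤ) :=
  Quotient.liftOn' q (fun a => Bgrp H₀ a ((m / H₀.index : ℕ) : ℤ))
    (fun a b h => by
      apply Bgrp_congr
      have h' : -a + b ∈ H₀ := QuotientAddGroup.leftRel_apply.1 h
      have := neg_mem h'
      simpa [neg_add_rev, sub_eq_add_neg, add_comm] using this)

lemma PsiSub_mk (H₀ : AddSubgroup A) (a : A) :
    PsiSub m H₀ (QuotientAddGroup.mk a) = Bgrp H₀ a ((m / H₀.index : ℕ) : ℤ) := rfl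

lemma index_PsiSub (hm : m ≠ 0) {H₀ : AddSubgroup A} (hH₀ : H₀.index ∣ m) (q : A ⧸ H₀) :
    (PsiSub m H₀ q).index = m := by
  induction q using QuotientAddGroup.induction_on with
  | H a =>
    rw [PsiSub_mk]
    have hd0 : m / H₀.index ≠ 0 :=
      fun h => hm (by rw [← Nat.mul_div_cancel' hH₀, h, mul_zero])
    rw [index_eq_of_map_snd (map_snd_Bgrp H₀ a _), comap_inl_Bgrp H₀ a hd0]
    exact Nat.mul_div_cancel' hH₀

/-- The parametrizing type: a finite-index subgroup of `A` together with a coset. -/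
abbrev TData (m : ℕ) (A : Type*) [AddCommGroup A] :=
  Σ H₀ : {H₀ : AddSubgroup A // H₀.index ∈ m.divisors}, A ⧸ (H₀ : AddSubgroup A)

noncomputable def Psi (hm : m ≠ 0) (x : TData m A) :
    {H : AddSubgroup (A × ℤ) // H.index = m} :=
  ⟨PsiSub m x.1.1 x.2, index_PsiSub m hm (Nat.mem_divisors.1 x.1.2).1 x.2⟩

lemma Psi_bijective (hm : m ≠ 0) : Function.Bijective (Psi (A := A) m hm) := by
  constructor
  · rintro ⟨⟨H₀, hH₀⟩, q⟩ ⟨⟨H₀', hH₀'⟩, q'⟩ h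
    induction q using QuotientAddGroup.induction_on with
    | H a =>
    induction q' using QuotientAddGroup.induction_on with
    | H a' =>
    have hval : Bgrp H₀ a ((m / H₀.index : ℕ) : ℤ)
        = Bgrp H₀' a' ((m / H₀'.index : ℕ) : ℤ) := congrArg Subtype.val h
    have hd0 : m / H₀.index ≠ 0 :=
      fun hz => hm (by rw [← Nat.mul_div_cancel' (Nat.mem_divisors.1 hH₀).1, hz, mul_zero])
    have hd0' : m / H₀'.index ≠ 0 :=
      fun hz => hm (by rw [← Nat.mul_div_cancel' (Nat.mem_divisors.1 hH₀').1, hz, mul_zero])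
    have hH : H₀ = H₀' := by
      rw [← comap_inl_Bgrp H₀ a hd0, ← comap_inl_Bgrp H₀' a' hd0', hval]
    subst hH
    have ha : a' - a ∈ H₀ := by
      rw [← mem_Bgrp_self (H₀ := H₀) (a := a) hd0]
      rw [hval]
      exact (mem_Bgrp_self hd0).2 (by simpa using zero_mem H₀)
    have : (QuotientAddGroup.mk a : A ⧸ H₀) = QuotientAddGroup.mk a' := by
      rw [QuotientAddGroup.eq]
      simpa [sub_eq_add_neg, add_comm] using ha
    simp only [Sigma.mk.inj_iff]
    exact ⟨trivial, heq_of_eq this⟩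
  · rintro ⟨H, hH⟩
    obtain ⟨d, hd⟩ := exists_nat_zmultiples' (H.map snd)
    have hidx := index_eq_of_map_snd hd
    rw [hH] at hidx
    set e := (H.comap inl).index with he
    have he_dvd : e ∣ m := Dvd.intro _ hidx.symm
    have he_mem : e ∈ m.divisors := Nat.mem_divisors.2 ⟨he_dvd, hm⟩
    have he0 : e ≠ 0 := fun h => hm (by rw [hidx, h, zero_mul])
    have hdm : m / e = d := by rw [hidx]; exact Nat.mul_div_cancel_left d (Nat.pos_of_ne_zero he0)
    -- find a lift a with (a, d) ∈ H
    have hdmem : (d : ℤ) ∈ H.map snd := by rw [hd]; exact mem_zmultiples _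
    obtain ⟨⟨a, k⟩, haH, hk⟩ := hdmem
    simp only [AddMonoidHom.coe_snd] at hk
    subst hk
    refine ⟨⟨⟨H.comap inl, he_mem⟩, QuotientAddGroup.mk a⟩, ?_⟩
    apply Subtype.ext
    show PsiSub m (H.comap inl) (QuotientAddGroup.mk a) = H
    rw [PsiSub_mk, ← he, hdm]
    exact (eq_Bgrp hd haH).symm

lemma finite_TData (hm : m ≠ 0)
    (hfin : ∀ e : ℕ, e ≠ 0 → Finite {H₀ : AddSubgroup A // H₀.index = e}) :
    Finite (TData m A) := by
  have hbase : Finite {H₀ : AddSubgroup A // H₀.index ∈ m.divisors} := by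
    have : ∀ e : { e // e ∈ m.divisors }, Finite {H₀ : AddSubgroup A // H₀.index = e.1} :=
      fun e => hfin e.1 (Nat.pos_of_mem_divisors e.2).ne'
    refine Finite.of_injective
      (fun H₀ : {H₀ : AddSubgroup A // H₀.index ∈ m.divisors} =>
        (⟨⟨H₀.1.index, H₀.2⟩, ⟨H₀.1, rfl⟩⟩ :
          Σ e : { e // e ∈ m.divisors }, {H₀ : AddSubgroup A // H₀.index = e.1})) ?_
    intro x y h
    have := congrArg (fun z : (Σ e : { e // e ∈ m.divisors },
      {H₀ : AddSubgroup A // H₀.index = e.1}) => z.2.1) h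
    exact Subtype.ext this
  have hfib : ∀ H₀ : {H₀ : AddSubgroup A // H₀.index ∈ m.divisors},
      Finite (A ⧸ (H₀ : AddSubgroup A)) := by
    intro H₀
    apply Nat.finite_of_card_ne_zero
    rw [← AddSubgroup.index_eq_card]
    exact fun h => hm (by simpa [h] using (Nat.mem_divisors.1 H₀.2).1)
  exact Finite.instSigma

lemma card_prod_int (hm : m ≠ 0)
    (hfin : ∀ e : ℕ, e ≠ 0 → Finite {H₀ : AddSubgroup A // H₀.index = e}) :
    Nat.card {H : AddSubgroup (A × ℤ) // H.index = m}
      = ∑ e ∈ m.divisors, e * Nat.card {H₀ : AddSubgroup A // H₀.index = e} := by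
  classical
  haveI hT : Finite (TData m A) := finite_TData m hm hfin
  rw [← Nat.card_eq_of_bijective _ (Psi_bijective m hm)]
  -- compute the cardinality of TData
  haveI : Finite {H₀ : AddSubgroup A // H₀.index ∈ m.divisors} := by
    have := hT; exact Finite.of_injective (fun H₀ => (⟨H₀, (0 : A ⧸ (H₀ : AddSubgroup A))⟩ :
      TData m A)) (fun x y h => congrArg Sigma.fst h)
  letI : Fintype {H₀ : AddSubgroup A // H₀.index ∈ m.divisors} := Fintype.ofFinite _
  haveI hfib : ∀ H₀ : {H₀ : AddSubgroup A // H₀.index ∈ m.divisors},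
      Finite (A ⧸ (H₀ : AddSubgroup A)) := by
    intro H₀
    apply Nat.finite_of_card_ne_zero
    rw [← AddSubgroup.index_eq_card]
    exact fun h => hm (by simpa [h] using (Nat.mem_divisors.1 H₀.2).1)
  letI : ∀ H₀ : {H₀ : AddSubgroup A // H₀.index ∈ m.divisors},
      Fintype (A ⧸ (H₀ : AddSubgroup A)) := fun H₀ => Fintype.ofFinite _
  rw [Nat.card_eq_fintype_card, Fintype.card_sigma]
  have hterm : ∀ H₀ : {H₀ : AddSubgroup A // H₀.index ∈ m.divisors},
      Fintype.card (A ⧸ (H₀ : AddSubgroup A)) = (H₀ : AddSubgroup A).index := by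
    intro H₀
    rw [← Nat.card_eq_fintype_card, ← AddSubgroup.index_eq_card]
  rw [Finset.sum_congr rfl (fun H₀ _ => hterm H₀)]
  -- fiberwise grouping by the index value
  rw [← Finset.sum_fiberwise_of_maps_to
    (g := fun H₀ : {H₀ : AddSubgroup A // H₀.index ∈ m.divisors} => (H₀ : AddSubgroup A).index)
    (fun (H₀ : {H₀ : AddSubgroup A // H₀.index ∈ m.divisors}) _ => H₀.2)]
  apply Finset.sum_congr rfl
  intro e he
  rw [Finset.sum_congr rfl (fun H₀ hH₀ => (Finset.mem_filter.1 hH₀).2),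
    Finset.sum_const, smul_eq_mul]
  rw [mul_comm]
  congr 1
  -- card of the filter equals Nat.card of the plain subtype
  rw [← Fintype.card_subtype]
  rw [← Nat.card_eq_fintype_card]
  apply Nat.card_congr
  exact Equiv.subtypeSubtypeEquivSubtype (p := fun H₀ : AddSubgroup A => H₀.index ∈ m.divisors)
    (q := fun H₀ => H₀.index = e) (fun {x} h => show x.index ∈ m.divisors by rw [h]; exact he)


section Main

open AddSubgroup Finset

/-- Transport of the subtype of finite-index subgroups along an `AddEquiv`. -/
noncomputable def indexSubtypeEquiv {G G' : Type*} [AddGroup G] [AddGroup G'] (e : G ≃+ G')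
    (m : ℕ) : {H : AddSubgroup G // H.index = m} ≃ {H : AddSubgroup G' // H.index = m} := by
  have hidx : ∀ (H : AddSubgroup G'), (H.comap e.toAddMonoidHom).index = H.index :=
    fun H => AddSubgroup.index_comap_of_surjective H e.surjective
  have hidx' : ∀ (H : AddSubgroup G), (H.comap e.symm.toAddMonoidHom).index = H.index :=
    fun H => AddSubgroup.index_comap_of_surjective H e.symm.surjective
  exact ⟨fun H => ⟨H.1.comap e.symm.toAddMonoidHom, by rw [hidx', H.2]⟩,
    fun H => ⟨H.1.comap e.toAddMonoidHom, by rw [hidx, H.2]⟩,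
    by rintro ⟨H, hH⟩; ext x; simp, by rintro ⟨H, hH⟩; ext x; simp⟩

/-- `Fin (n+1) → ℤ` splits off its first coordinate. -/
def piSuccAddEquiv (n : ℕ) : (Fin (n + 1) → ℤ) ≃+ ((Fin n → ℤ) × ℤ) :=
  { (Fin.consEquiv (fun _ : Fin (n + 1) => ℤ)).symm.trans (Equiv.prodComm ℤ (Fin n → ℤ)) with
    map_add' := fun _ _ => rfl }

def funUniqueAddEquiv : (Fin 1 → ℤ) ≃+ ℤ :=
  { Equiv.funUnique (Fin 1) ℤ with map_add' := fun _ _ => rfl }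

lemma main_induction : ∀ n, 1 ≤ n → ∀ m : ℕ, m ≠ 0 →
    Finite {H : AddSubgroup (Fin n → ℤ) // H.index = m} ∧
      Nat.card {H : AddSubgroup (Fin n → ℤ) // H.index = m} = R n m := by
  refine Nat.le_induction ?_ ?_
  · intro m hm
    have hcard : Nat.card {H : AddSubgroup (Fin 1 → ℤ) // H.index = m} = 1 := by
      rw [Nat.card_congr (indexSubtypeEquiv funUniqueAddEquiv m)]
      exact card_index_int m (Nat.pos_of_ne_zero hm)
    refine ⟨Nat.finite_of_card_ne_zero (by rw [hcard]; exact one_ne_zero), ?_⟩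
    rw [hcard, R_one m (Nat.pos_of_ne_zero hm)]
  · intro n hn ih m hm
    have e := piSuccAddEquiv n
    have hfin : ∀ k : ℕ, k ≠ 0 → Finite {H₀ : AddSubgroup (Fin n → ℤ) // H₀.index = k} :=
      fun k hk => (ih k hk).1
    have hcard :
        Nat.card {H : AddSubgroup (Fin (n + 1) → ℤ) // H.index = m}
          = Nat.card {H : AddSubgroup ((Fin n → ℤ) × ℤ) // H.index = m} :=
      Nat.card_congr (indexSubtypeEquiv e m)
    have hprod := card_prod_int (A := Fin n → ℤ) m hm hfin
    constructor
    · haveI hT : Finite (TData m (Fin n → ℤ)) := finite_TData m hm hfin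
      haveI : Finite {H : AddSubgroup ((Fin n → ℤ) × ℤ) // H.index = m} :=
        Finite.of_surjective (Psi m hm) (Psi_bijective m hm).2
      exact Finite.of_equiv _ (indexSubtypeEquiv e m).symm
    · rw [hcard, hprod, R_succ n m (Nat.pos_of_ne_zero hm)]
      apply Finset.sum_congr rfl
      intro k hk
      rw [(ih k (Nat.pos_of_mem_divisors hk).ne').2]

end Main

/-- The number of sublattices (subgroups) of index `m` in `ℤ^n`. -/
noncomputable def sublatticeCount (n m : ℕ) : ℕ :=
  Nat.card {H : AddSubgroup (Fin n → ℤ) // H.index = m}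

theorem sublattice_count_eq_sum_ordered_factorizations
    (n m : ℕ) (hn : 1 ≤ n) (hm : 0 < m) :
    sublatticeCount n m =
      ∑ d ∈ (Fintype.piFinset fun _ : Fin n => m.divisors).filter
          (fun d => ∏ i, d i = m),
        ∏ i, (d i) ^ (i : ℕ) := by
  exact (main_induction n hn m hm.ne').2
end

section
/- If m = p₁^{r₁} ⋯ p_k^{r_k} is the prime factorization of m, then the number of sublattices of index m in ℤ^n equals ∏_{i=1}^{k} ∏_{j=1}^{r_i} (p_i^{n+j-1} − 1)/(p_i^{j} − 1). -/
open AddSubgroup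

lemma zmul_index {A : Type*} [AddCommGroup A] (v : A) (d : ℕ) (hd : d ≠ 0) :
    (zmultiples ((v, (d : ℤ)) : A × ℤ)).index = Nat.card A * d := by
  classical
  set Z := zmultiples ((v, (d : ℤ)) : A × ℤ) with hZ
  -- the quotient
  let Q := (A × ℤ) ⧸ Z
  -- map to ZMod d
  have hcond : ∀ x ∈ Z, ((Int.castAddHom (ZMod d)).comp (AddMonoidHom.snd A ℤ)) x = 0 := by
    rintro x hx
    rw [mem_zmultiples_iff] at hx
    obtain ⟨k, rfl⟩ := hx
    simp [ZMod.intCast_zmod_eq_zero_iff_dvd]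
  let f : Q →+ ZMod d := QuotientAddGroup.lift Z _ hcond
  have hfsurj : Function.Surjective f := by
    intro z
    obtain ⟨t, rfl⟩ := ZMod.intCast_surjective z
    exact ⟨QuotientAddGroup.mk (0, t), rfl⟩
  -- map from A into ker f
  let g : A →+ Q := (QuotientAddGroup.mk' Z).comp (AddMonoidHom.inl A ℤ)
  have hginj : Function.Injective g := by
    rw [injective_iff_map_eq_zero]
    intro a ha
    have : ((a, (0:ℤ)) : A × ℤ) ∈ Z := by
      rwa [← QuotientAddGroup.eq_zero_iff]
    rw [mem_zmultiples_iff] at this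
    obtain ⟨k, hk⟩ := this
    rw [Prod.ext_iff] at hk
    simp only [Prod.snd] at hk
    have hk2 : k • (d:ℤ) = 0 := hk.2
    have hk0 : k = 0 := by
      have := (by simpa [zsmul_eq_mul] using hk2 : k = 0 ∨ d = 0)
      tauto
    have := hk.1
    rw [hk0] at this
    simpa using this.symm
  have hrange : g.range = f.ker := by
    ext x
    constructor
    · rintro ⟨a, rfl⟩
      show f (QuotientAddGroup.mk (a, (0:ℤ))) = 0
      show ((0:ℤ) : ZMod d) = 0
      simp
    · intro hx
      obtain ⟨⟨a, t⟩, rfl⟩ := QuotientAddGroup.mk_surjective x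
      rw [AddMonoidHom.mem_ker] at hx
      have ht : (d:ℤ) ∣ t := by
        have : ((t : ℤ) : ZMod d) = 0 := hx
        rwa [ZMod.intCast_zmod_eq_zero_iff_dvd] at this
      obtain ⟨c, rfl⟩ := ht
      refine ⟨a - c • v, ?_⟩
      have : ((a - c • v, (0:ℤ)) : A × ℤ) + c • (v, (d:ℤ)) = (a, (d:ℤ) * c) := by
        ext <;> simp [mul_comm] <;> ring
      calc g (a - c • v) = QuotientAddGroup.mk ((a - c•v, (0:ℤ)) + c • (v, (d:ℤ))) := by
            rw [QuotientAddGroup.mk_add_of_mem]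
            · rfl
            · exact zsmul_mem (mem_zmultiples _) c
        _ = QuotientAddGroup.mk (a, (d:ℤ)*c) := by rw [this]
  -- now count
  have h1 : (⊥ : AddSubgroup Q).relIndex f.ker * f.ker.index = (⊥ : AddSubgroup Q).index :=
    relIndex_mul_index bot_le
  rw [relIndex_bot_left, index_bot] at h1
  have h2 : f.ker.index = d := by
    rw [AddSubgroup.index_ker, AddMonoidHom.range_eq_top.2 hfsurj]
    rw [Nat.card_congr AddSubgroup.topEquiv.toEquiv]
    exact Nat.card_zmod d
  have h3 : Nat.card f.ker = Nat.card A := by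
    rw [← hrange]
    have : Nat.card g.range = Nat.card A := Nat.card_range_of_injective hginj
    simpa using this
  have hindex : Z.index = Nat.card Q := rfl
  rw [hindex, ← h1, h2, h3]
section Step2
variable {G : Type*} [AddCommGroup G]

/-- The sublattice of `G × ℤ` determined by a finite-index `K ≤ G`, a positive `d`, and a coset. -/
def Hgrp (K : AddSubgroup G) (d : ℕ) (vb : G ⧸ K) : AddSubgroup (G × ℤ) :=
  (zmultiples ((vb, (d : ℤ)) : (G ⧸ K) × ℤ)).comap
    ((QuotientAddGroup.mk' K).prodMap (AddMonoidHom.id ℤ))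

lemma mem_Hgrp {K : AddSubgroup G} {d : ℕ} {vb : G ⧸ K} {x : G × ℤ} :
    x ∈ Hgrp K d vb ↔ ∃ k : ℤ, k • vb = QuotientAddGroup.mk x.1 ∧ k * d = x.2 := by
  simp only [Hgrp, AddSubgroup.mem_comap, mem_zmultiples_iff, Prod.ext_iff,
    AddMonoidHom.coe_prodMap, Prod.map_apply, AddMonoidHom.id_apply, Prod.smul_fst, Prod.smul_snd,
    smul_eq_mul, QuotientAddGroup.mk'_apply]
  rfl

lemma Hgrp_index (K : AddSubgroup G) (d : ℕ) (hd : d ≠ 0) (vb : G ⧸ K) :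
    (Hgrp K d vb).index = K.index * d := by
  have hsurj : Function.Surjective ⇑((QuotientAddGroup.mk' K).prodMap (AddMonoidHom.id ℤ)) :=
    Function.Surjective.prodMap (QuotientAddGroup.mk'_surjective K) Function.surjective_id
  rw [Hgrp, AddSubgroup.index_comap_of_surjective _ hsurj, zmul_index _ _ hd]
  rfl

end Step2
section Step3
variable {G : Type*} [AddCommGroup G]

lemma zmultiples_neg' {x : G} : zmultiples (-x) = zmultiples x := by
  ext y
  simp only [mem_zmultiples_iff]
  constructor
  · rintro ⟨k, rfl⟩; exact ⟨-k, by simp⟩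
  · rintro ⟨k, rfl⟩; exact ⟨-k, by simp⟩

lemma zmultiples_natAbs (a : ℤ) :
    zmultiples ((a.natAbs : ℤ)) = zmultiples a := by
  rcases Int.natAbs_eq a with h | h
  · conv_rhs => rw [h]
  · conv_rhs => rw [h]
    rw [zmultiples_neg']

lemma mem_Hgrp_zero {K : AddSubgroup G} {d : ℕ} (hd : d ≠ 0) {vb : G ⧸ K} {g : G} :
    ((g, (0:ℤ)) : G × ℤ) ∈ Hgrp K d vb ↔ g ∈ K := by
  rw [mem_Hgrp]
  constructor
  · rintro ⟨k, h1, h2⟩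
    have hk : k = 0 := by
      rcases mul_eq_zero.1 h2 with h | h
      · exact h
      · exact absurd (by exact_mod_cast h) hd
    rw [hk, zero_smul] at h1
    rw [← QuotientAddGroup.eq_zero_iff, ← h1]
  · intro hg
    exact ⟨0, by rw [zero_smul]; exact ((QuotientAddGroup.eq_zero_iff g).2 hg).symm, by simp⟩

/-- The sigma type indexing sublattices of `G × ℤ` of index `m`. -/
def SigT (G : Type*) [AddCommGroup G] (m : ℕ) : Type _ :=
  Σ e : {e : ℕ // e ∈ m.divisors}, Σ K : {K : AddSubgroup G // K.index = e.1}, G ⧸ K.1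

lemma sigT_d_ne_zero {m : ℕ} (e : {e : ℕ // e ∈ m.divisors}) : m / e.1 ≠ 0 := by
  obtain ⟨hdvd, hm⟩ := Nat.mem_divisors.1 e.2
  have h2 : m / e.1 * e.1 = m := Nat.div_mul_cancel hdvd
  intro h
  rw [h, zero_mul] at h2
  exact hm h2.symm

noncomputable def latFun {m : ℕ} (x : SigT G m) : {H : AddSubgroup (G × ℤ) // H.index = m} :=
  ⟨Hgrp x.2.1.1 (m / x.1.1) x.2.2, by
    obtain ⟨hdvd, hm⟩ := Nat.mem_divisors.1 x.1.2
    rw [Hgrp_index _ _ (sigT_d_ne_zero x.1), x.2.1.2, Nat.mul_div_cancel' hdvd]⟩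

lemma latFun_injective {m : ℕ} : Function.Injective (latFun (G := G) (m := m)) := by
  rintro ⟨⟨e, he⟩, ⟨K, hK⟩, vb⟩ ⟨⟨e', he'⟩, ⟨K', hK'⟩, vb'⟩ h
  rw [Subtype.ext_iff] at h
  simp only [latFun] at h
  have hd : m / e ≠ 0 := sigT_d_ne_zero ⟨e, he⟩
  have hd' : m / e' ≠ 0 := sigT_d_ne_zero ⟨e', he'⟩
  have hKK : K = K' := by
    ext g
    rw [← mem_Hgrp_zero hd (vb := vb), h, mem_Hgrp_zero hd']
  subst hKK
  have hee : e = e' := hK.symm.trans hK'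
  subst hee
  have hvb : vb = vb' := by
    obtain ⟨v, rfl⟩ := QuotientAddGroup.mk_surjective vb
    have hv : ((v, ((m / e : ℕ) : ℤ)) : G × ℤ) ∈ Hgrp K (m / e) (QuotientAddGroup.mk v) :=
      mem_Hgrp.2 ⟨1, by simp, by simp⟩
    rw [h] at hv
    obtain ⟨k, h1, h2⟩ := mem_Hgrp.1 hv
    have hk1 : k = 1 := by
      have hz : (k - 1) * ((m / e : ℕ) : ℤ) = 0 := by push_cast at h2 ⊢; linarith
      rcases mul_eq_zero.1 hz with h' | h'
      · linarith [sub_eq_zero.1 h']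
      · exact absurd (by exact_mod_cast h') hd
    rw [hk1, one_smul] at h1
    exact h1.symm
  subst hvb
  rfl

lemma latFun_surjective {m : ℕ} (hm : m ≠ 0) :
    Function.Surjective (latFun (G := G) (m := m)) := by
  rintro ⟨H, hH⟩
  set K : AddSubgroup G := H.comap (AddMonoidHom.inl G ℤ) with hKdef
  obtain ⟨a, ha⟩ := Int.subgroup_cyclic (H.map (AddMonoidHom.snd G ℤ))
  set d0 : ℕ := a.natAbs with hd0def
  have hP : H.map (AddMonoidHom.snd G ℤ) = zmultiples ((d0 : ℤ)) := by
    rw [ha, hd0def, zmultiples_natAbs, ← AddSubgroup.zmultiples_eq_closure]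
  have hd0 : d0 ≠ 0 := by
    rintro h
    rw [h] at hP
    have hle : H ≤ (AddMonoidHom.snd G ℤ).ker := by
      intro x hx
      have hx2 : (AddMonoidHom.snd G ℤ) x ∈ H.map (AddMonoidHom.snd G ℤ) :=
        AddSubgroup.mem_map_of_mem _ hx
      rw [hP] at hx2
      have h0 : (AddMonoidHom.snd G ℤ) x = 0 := by simpa using hx2
      exact AddMonoidHom.mem_ker.mpr h0
    have hdvd : ((AddMonoidHom.snd G ℤ).ker).index ∣ H.index :=
      AddSubgroup.index_dvd_of_le hle
    have hker : ((AddMonoidHom.snd G ℤ).ker).index = 0 := by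
      rw [AddSubgroup.index_ker, AddMonoidHom.range_eq_top.2 (fun t => ⟨(0, t), rfl⟩)]
      rw [Nat.card_congr AddSubgroup.topEquiv.toEquiv]
      exact Nat.card_eq_zero_of_infinite
    rw [hker, hH] at hdvd
    exact hm (zero_dvd_iff.1 hdvd)
  have hmem : ((d0 : ℤ)) ∈ H.map (AddMonoidHom.snd G ℤ) := by
    rw [hP]; exact mem_zmultiples _
  obtain ⟨⟨v, t⟩, hvH, ht⟩ := hmem
  have htd : t = (d0 : ℤ) := ht
  rw [htd] at hvH
  have hHeq : H = Hgrp K d0 (QuotientAddGroup.mk v) := by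
    ext ⟨g, t⟩
    rw [mem_Hgrp]
    constructor
    · intro hgt
      have hmem2 : (t : ℤ) ∈ H.map (AddMonoidHom.snd G ℤ) := ⟨(g, t), hgt, rfl⟩
      rw [hP, mem_zmultiples_iff] at hmem2
      obtain ⟨k, hk⟩ := hmem2
      refine ⟨k, ?_, by simpa [smul_eq_mul] using hk⟩
      have hsub : ((g, t) : G × ℤ) - k • (v, (d0:ℤ)) ∈ H := sub_mem hgt (zsmul_mem hvH k)
      have hsub2 : ((g - k • v, (0:ℤ)) : G × ℤ) ∈ H := by
        have hc : ((g, t) : G × ℤ) - k • (v, (d0:ℤ)) = (g - k • v, t - k • (d0:ℤ)) := rfl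
        rwa [hc, show t - k • (d0:ℤ) = 0 by rw [hk]; ring] at hsub
      have hgK : g - k • v ∈ K := hsub2
      have hz := (QuotientAddGroup.eq_zero_iff _).2 hgK
      rw [QuotientAddGroup.mk_sub] at hz
      have h2 : QuotientAddGroup.mk (k • v) = (QuotientAddGroup.mk g : G ⧸ K) :=
        (sub_eq_zero.1 hz).symm
      rw [← h2, QuotientAddGroup.mk_zsmul]
    · rintro ⟨k, h1, h2⟩
      have hgK : g - k • v ∈ K := by
        rw [← QuotientAddGroup.eq_zero_iff, QuotientAddGroup.mk_sub,
          QuotientAddGroup.mk_zsmul, sub_eq_zero, h1]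
      have hsub2 : ((g - k • v, (0:ℤ)) : G × ℤ) ∈ H := hgK
      have h2' : t = k * (d0:ℤ) := h2.symm
      subst h2'
      have hc : ((g, k * (d0:ℤ)) : G × ℤ) = (g - k • v, (0:ℤ)) + k • (v, (d0:ℤ)) := by
        ext
        · simp
        · show k * (d0:ℤ) = 0 + k • (d0:ℤ)
          rw [zero_add, smul_eq_mul]
      rw [hc]
      exact add_mem hsub2 (zsmul_mem hvH k)
  have hidx : K.index * d0 = m := by
    rw [← hH, hHeq, Hgrp_index _ _ hd0]
  have hKne : K.index ≠ 0 := by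
    rintro h; rw [h, zero_mul] at hidx; exact hm hidx.symm
  have hedvd : K.index ∈ m.divisors := Nat.mem_divisors.2 ⟨⟨d0, hidx.symm⟩, hm⟩
  have hdd : m / K.index = d0 := by
    rw [← hidx, Nat.mul_div_cancel_left _ (Nat.pos_of_ne_zero hKne)]
  refine ⟨⟨⟨K.index, hedvd⟩, ⟨K, rfl⟩, QuotientAddGroup.mk v⟩, ?_⟩
  apply Subtype.ext
  simp only [latFun]
  rw [hdd, ← hHeq]

noncomputable def latEquiv (m : ℕ) (hm : m ≠ 0) :
    SigT G m ≃ {H : AddSubgroup (G × ℤ) // H.index = m} :=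
  Equiv.ofBijective latFun ⟨latFun_injective, latFun_surjective hm⟩

end Step3
section Step4
variable {G G' : Type*} [AddCommGroup G] [AddCommGroup G']

lemma nat_card_sigma {ι : Type*} [Fintype ι] (f : ι → Type*) [∀ i, Finite (f i)] :
    Nat.card (Σ i, f i) = ∑ i : ι, Nat.card (f i) := by
  classical
  letI : ∀ i, Fintype (f i) := fun i => Fintype.ofFinite _
  simp [Nat.card_eq_fintype_card, Fintype.card_sigma]

lemma quot_finite {K : AddSubgroup G} (h : K.index ≠ 0) : Finite (G ⧸ K) :=
  Nat.finite_of_card_ne_zero h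

lemma sigT_finite {m : ℕ} (hm : m ≠ 0)
    (hfin : ∀ e, e ≠ 0 → Finite {K : AddSubgroup G // K.index = e}) :
    Finite (SigT G m) := by
  haveI hF1 : ∀ e : {e : ℕ // e ∈ m.divisors}, Finite {K : AddSubgroup G // K.index = e.1} :=
    fun e => hfin e.1 (Nat.pos_of_mem_divisors e.2).ne'
  haveI hF2 : ∀ (e : {e : ℕ // e ∈ m.divisors}) (K : {K : AddSubgroup G // K.index = e.1}),
      Finite (G ⧸ K.1) := fun e K => quot_finite (by rw [K.2]; exact (Nat.pos_of_mem_divisors e.2).ne')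
  exact inferInstanceAs (Finite (Σ e : {e : ℕ // e ∈ m.divisors},
    Σ K : {K : AddSubgroup G // K.index = e.1}, G ⧸ K.1))

lemma cnt_prod_int (m : ℕ) (hm : m ≠ 0)
    (hfin : ∀ e, e ≠ 0 → Finite {K : AddSubgroup G // K.index = e}) :
    Nat.card {H : AddSubgroup (G × ℤ) // H.index = m}
      = ∑ e ∈ m.divisors, Nat.card {K : AddSubgroup G // K.index = e} * e := by
  classical
  rw [← Nat.card_congr (latEquiv (G := G) m hm)]
  haveI hF1 : ∀ e : {e : ℕ // e ∈ m.divisors}, Finite {K : AddSubgroup G // K.index = e.1} :=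
    fun e => hfin e.1 (Nat.pos_of_mem_divisors e.2).ne'
  haveI hF2 : ∀ (e : {e : ℕ // e ∈ m.divisors}) (K : {K : AddSubgroup G // K.index = e.1}),
      Finite (G ⧸ K.1) := fun e K => quot_finite (by rw [K.2]; exact (Nat.pos_of_mem_divisors e.2).ne')
  letI : ∀ e : {e : ℕ // e ∈ m.divisors}, Fintype {K : AddSubgroup G // K.index = e.1} :=
    fun e => Fintype.ofFinite _
  have h1 : Nat.card (SigT G m) = ∑ e : {e : ℕ // e ∈ m.divisors},
      Nat.card (Σ K : {K : AddSubgroup G // K.index = e.1}, G ⧸ K.1) :=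
    nat_card_sigma _
  have h2 : ∀ e : {e : ℕ // e ∈ m.divisors},
      Nat.card (Σ K : {K : AddSubgroup G // K.index = e.1}, G ⧸ K.1)
        = Nat.card {K : AddSubgroup G // K.index = e.1} * e.1 := by
    intro e
    rw [nat_card_sigma]
    have he : ∀ K : {K : AddSubgroup G // K.index = e.1}, Nat.card (G ⧸ K.1) = e.1 := by
      intro K
      have : Nat.card (G ⧸ K.1) = K.1.index := rfl
      rw [this, K.2]
    rw [Finset.sum_congr rfl (fun K _ => he K), Finset.sum_const, Finset.card_univ,
      smul_eq_mul, Nat.card_eq_fintype_card]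
  rw [h1, Finset.sum_congr rfl (fun e _ => h2 e), ← Finset.sum_coe_sort m.divisors
    (fun e => Nat.card {K : AddSubgroup G // K.index = e} * e)]

/-- Transfer of index-`m` subgroup counting along an `AddEquiv`. -/
def subCntEquiv (e : G ≃+ G') (m : ℕ) :
    {H : AddSubgroup G // H.index = m} ≃ {H : AddSubgroup G' // H.index = m} where
  toFun H := ⟨H.1.comap e.symm.toAddMonoidHom, by
    rw [AddSubgroup.index_comap_of_surjective _ e.symm.surjective, H.2]⟩
  invFun H := ⟨H.1.comap e.toAddMonoidHom, by
    rw [AddSubgroup.index_comap_of_surjective _ e.surjective, H.2]⟩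
  left_inv H := Subtype.ext (by ext x; simp)
  right_inv H := Subtype.ext (by ext x; simp)

end Step4

section Step5

/-- `ℤ^{n+1} ≃+ ℤ^n × ℤ`. -/
def piE (n : ℕ) : (Fin (n + 1) → ℤ) ≃+ (Fin n → ℤ) × ℤ :=
  (AddEquiv.mk' (Fin.consEquiv (fun _ : Fin (n + 1) => ℤ)).symm (fun f g => rfl)).trans (AddEquiv.prodComm)

lemma latticeFinite : ∀ n m : ℕ, m ≠ 0 → Finite {H : AddSubgroup (Fin n → ℤ) // H.index = m} := by
  intro n
  induction n with
  | zero =>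
    intro m hm
    haveI : Subsingleton (AddSubgroup (Fin 0 → ℤ)) := inferInstance
    infer_instance
  | succ n ih =>
    intro m hm
    haveI := sigT_finite (G := Fin n → ℤ) hm (fun e he => ih e he)
    exact Finite.of_equiv _ ((latEquiv (G := Fin n → ℤ) m hm).trans (subCntEquiv (piE n) m).symm)

lemma cnt_succ (n m : ℕ) (hm : m ≠ 0) :
    sublatticeCount (n + 1) m = ∑ e ∈ m.divisors, sublatticeCount n e * e := by
  rw [sublatticeCount, Nat.card_congr (subCntEquiv (piE n) m)]
  exact cnt_prod_int m hm (fun e he => latticeFinite n e he)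

end Step5
section Step6
open ArithmeticFunction
open scoped ArithmeticFunction.zeta

noncomputable def latAF (n : ℕ) : ArithmeticFunction ℕ :=
  ⟨fun m => if m = 0 then 0 else sublatticeCount n m, by simp⟩

lemma latAF_apply {n m : ℕ} (hm : m ≠ 0) : latAF n m = sublatticeCount n m := if_neg hm

lemma sublatticeCount_one (n : ℕ) : sublatticeCount n 1 = 1 := by
  rw [sublatticeCount]
  have huniq : ∀ H : {H : AddSubgroup (Fin n → ℤ) // H.index = 1},
      H = ⟨⊤, AddSubgroup.index_top⟩ := by
    rintro ⟨H, hH⟩; exact Subtype.ext (AddSubgroup.index_eq_one.1 hH)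
  haveI : Unique {H : AddSubgroup (Fin n → ℤ) // H.index = 1} :=
    ⟨⟨⟨⊤, AddSubgroup.index_top⟩⟩, huniq⟩
  exact Nat.card_unique

lemma latAF_zero : latAF 0 = 1 := by
  ext m
  rcases eq_or_ne m 0 with rfl | hm
  · simp [latAF]
  rcases eq_or_ne m 1 with rfl | hm1
  · rw [latAF_apply one_ne_zero, sublatticeCount_one, ArithmeticFunction.one_apply]
    simp
  · rw [latAF_apply hm, ArithmeticFunction.one_apply, if_neg hm1, sublatticeCount]
    haveI : IsEmpty {H : AddSubgroup (Fin 0 → ℤ) // H.index = m} := by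
      constructor
      rintro ⟨H, hH⟩
      have hHt : H = ⊤ := Subsingleton.elim _ _
      rw [hHt, AddSubgroup.index_top] at hH
      exact hm1 hH.symm
    exact Nat.card_of_isEmpty

lemma latAF_succ (n : ℕ) : latAF (n + 1) = ζ * ((pow 1).pmul (latAF n)) := by
  ext m
  rcases eq_or_ne m 0 with rfl | hm
  · simp
  rw [latAF_apply hm, zeta_mul_apply, cnt_succ n m hm]
  refine Finset.sum_congr rfl fun e he => ?_
  have he0 : e ≠ 0 := (Nat.pos_of_mem_divisors he).ne'
  rw [pmul_apply, pow_apply, if_neg (by simp), latAF_apply he0, pow_one, mul_comm]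

lemma latAF_mult (n : ℕ) : (latAF n).IsMultiplicative := by
  induction n with
  | zero => rw [latAF_zero]; exact isMultiplicative_one
  | succ n ih => rw [latAF_succ]; exact isMultiplicative_zeta.mul (isMultiplicative_pow.pmul ih)

end Step6
section Step7
open Finset ArithmeticFunction

lemma geom_aux (q : ℚ) (hq : 2 ≤ q) (n : ℕ) (r : ℕ) :
    ∑ s ∈ range (r + 1), q ^ s * ∏ i ∈ range s, ((q ^ (n + i) - 1) / (q ^ (i + 1) - 1))
      = ∏ i ∈ range r, ((q ^ (n + 1 + i) - 1) / (q ^ (i + 1) - 1)) := by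
  have hden : ∀ j : ℕ, q ^ (j + 1) - 1 ≠ 0 := by
    intro j
    have h1 : (2:ℚ) ≤ q ^ (j + 1) :=
      le_trans hq (le_self_pow₀ (by linarith) (Nat.succ_ne_zero j))
    intro h; linarith [sub_eq_zero.1 h]
  have hDen : ∀ s : ℕ, (∏ i ∈ range s, (q ^ (i + 1) - 1)) ≠ 0 :=
    fun s => prod_ne_zero_iff.2 fun i _ => hden i
  induction r with
  | zero => simp
  | succ r ih =>
    rw [sum_range_succ, ih]
    have hG : ∏ i ∈ range (r + 1), ((q ^ (n + i) - 1) / (q ^ (i + 1) - 1))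
        = ((q ^ n - 1) * ∏ i ∈ range r, (q ^ (n + 1 + i) - 1)) /
          ((q ^ (r + 1) - 1) * ∏ i ∈ range r, (q ^ (i + 1) - 1)) := by
      rw [prod_div_distrib]
      congr 1
      · rw [prod_range_succ', add_zero, mul_comm]
        exact congrArg ((q ^ n - 1) * ·)
          (prod_congr rfl fun i _ => by rw [show n + (i + 1) = n + 1 + i by ring])
      · rw [prod_range_succ, mul_comm]
    rw [hG]
    conv_rhs => rw [prod_range_succ]
    simp only [prod_div_distrib]
    have hc := hden r
    have hB := hDen r
    rw [← mul_div_assoc, div_mul_div_comm,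
      div_add_div _ _ hB (mul_ne_zero (hden r) (hDen r)),
      div_eq_div_iff (mul_ne_zero hB (mul_ne_zero hc hB)) (mul_ne_zero hB hc)]
    ring
end Step7
section Step8
open Finset ArithmeticFunction

lemma icc_to_range (p : ℕ) (n r : ℕ) :
    ∏ j ∈ Finset.Icc 1 r, (((p : ℚ) ^ (n + j - 1) - 1) / ((p : ℚ) ^ j - 1))
      = ∏ i ∈ range r, (((p : ℚ) ^ (n + i) - 1) / ((p : ℚ) ^ (i + 1) - 1)) := by
  rw [← Finset.Ico_add_one_right_eq_Icc, Finset.prod_Ico_eq_prod_range]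
  refine prod_congr (by norm_num) fun i _ => ?_
  have h1 : n + (1 + i) - 1 = n + i := by omega
  have h2 : 1 + i = i + 1 := by omega
  rw [h1, h2]

lemma latAF_prime_pow {p : ℕ} (hp : p.Prime) :
    ∀ n r : ℕ, ((latAF n (p ^ r) : ℕ) : ℚ)
      = ∏ i ∈ range r, (((p : ℚ) ^ (n + i) - 1) / ((p : ℚ) ^ (i + 1) - 1)) := by
  intro n
  induction n with
  | zero =>
    intro r
    rcases Nat.eq_zero_or_pos r with rfl | hr
    · simp [latAF_zero]
    · rw [latAF_zero, ArithmeticFunction.one_apply,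
        if_neg (Nat.one_lt_pow hr.ne' hp.one_lt).ne']
      rw [eq_comm, Nat.cast_zero]
      apply prod_eq_zero (Finset.mem_range.2 hr)
      rw [add_zero, pow_zero, sub_self, zero_div]
  | succ n ih =>
    intro r
    rw [latAF_succ, zeta_mul_apply, Nat.sum_divisors_prime_pow hp]
    push_cast
    have hterm : ∀ s : ℕ, (((pow 1).pmul (latAF n) (p ^ s) : ℕ) : ℚ)
        = (p : ℚ) ^ s * ∏ i ∈ range s, (((p : ℚ) ^ (n + i) - 1) / ((p : ℚ) ^ (i + 1) - 1)) := by
      intro s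
      rw [pmul_apply, pow_apply, if_neg (by simp), pow_one, Nat.cast_mul, ih s]
      push_cast
      ring
    rw [Finset.sum_congr rfl fun s _ => hterm s]
    exact geom_aux (p : ℚ) (by exact_mod_cast hp.two_le) n r

theorem sublattice_count_eq_gruber_product (n m k : ℕ)
    (p r : Fin k → ℕ) (hp : ∀ i, (p i).Prime) (hinj : Function.Injective p)
    (hr : ∀ i, 1 ≤ r i) (hm : m = ∏ i, p i ^ r i) :
    (sublatticeCount n m : ℚ) =
      ∏ i, ∏ j ∈ Finset.Icc 1 (r i),
        ((p i : ℚ) ^ (n + j - 1) - 1) / ((p i : ℚ) ^ j - 1) := by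
  have hm0 : m ≠ 0 := by
    rw [hm]
    exact (Finset.prod_pos fun i _ => pow_pos (hp i).pos _).ne'
  rw [← latAF_apply hm0, hm]
  have hpair : (↑(Finset.univ : Finset (Fin k)) : Set (Fin k)).Pairwise
      (Function.onFun Nat.Coprime fun i => p i ^ r i) := by
    intro i _ j _ hij
    show Nat.Coprime (p i ^ r i) (p j ^ r j)
    exact Nat.Coprime.pow _ _ ((Nat.coprime_primes (hp i) (hp j)).2 fun h => hij (hinj h))
  rw [(latAF_mult n).map_prod _ Finset.univ hpair]
  push_cast
  exact Finset.prod_congr rfl fun i _ => by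
    rw [latAF_prime_pow (hp i) n (r i), icc_to_range]
end Step8
end

section
/- For fixed n ≥ 1 and prime p, the number of subgroups of ℤ^n of index p^k, viewed as a function of p, is given by a polynomial in p with nonnegative integer coefficients (namely the Gaussian binomial polynomial [n+k−1 choose k]_q evaluated at q = p). -/
open AddSubgroup

namespace SublatticeAux

variable {A : Type*} [AddCommGroup A]

/-- The subgroup of `A × ℤ` consisting of `(x, t*d)` with `x ≡ t•q mod K`. -/
def mkH (K : AddSubgroup A) (d : ℕ) (q : A ⧸ K) : AddSubgroup (A × ℤ) where
  carrier := {z | ∃ t : ℤ, z.2 = t * d ∧ QuotientAddGroup.mk' K z.1 = t • q}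
  zero_mem' := ⟨0, by simp⟩
  add_mem' := by
    rintro ⟨x, y⟩ ⟨x', y'⟩ ⟨t, ht, hq⟩ ⟨t', ht', hq'⟩
    dsimp only at ht hq ht' hq'
    refine ⟨t + t', ?_, ?_⟩
    · show y + y' = _
      rw [ht, ht', add_mul]
    · show QuotientAddGroup.mk' K (x + x') = _
      rw [map_add, hq, hq', add_zsmul]
  neg_mem' := by
    rintro ⟨x, y⟩ ⟨t, ht, hq⟩
    dsimp only at ht hq
    refine ⟨-t, ?_, ?_⟩
    · show -y = _
      rw [ht, neg_mul]
    · show QuotientAddGroup.mk' K (-x) = _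
      rw [map_neg, hq, neg_zsmul]

lemma mem_mkH {K : AddSubgroup A} {d : ℕ} {q : A ⧸ K} {z : A × ℤ} :
    z ∈ mkH K d q ↔ ∃ t : ℤ, z.2 = t * d ∧ QuotientAddGroup.mk' K z.1 = t • q := Iff.rfl

lemma mkH_le_prod {K : AddSubgroup A} {d : ℕ} {q : A ⧸ K} :
    mkH K d q ≤ (⊤ : AddSubgroup A).prod (zmultiples (d : ℤ)) := by
  rintro ⟨x, y⟩ ⟨t, ht, -⟩
  exact ⟨trivial, ⟨t, by simpa using ht.symm⟩⟩

/-- The quotient map used to compute the relative index of `mkH K d q`. -/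
def mkHhom (K : AddSubgroup A) (d : ℕ) (q : A ⧸ K) :
    ↥((⊤ : AddSubgroup A).prod (zmultiples (d : ℤ))) →+ A ⧸ K where
  toFun z := QuotientAddGroup.mk' K z.val.1 - (z.val.2 / d) • q
  map_zero' := by simp
  map_add' := by
    rintro ⟨⟨x, y⟩, -, k, hk⟩ ⟨⟨x', y'⟩, -, k', hk'⟩
    simp only at hk hk'
    subst hk hk'
    by_cases hd0 : (d : ℤ) = 0
    · simp [hd0, map_add]
    · have h1 : (k • (d:ℤ) + k' • (d:ℤ)) / d = k + k' := by
        rw [smul_eq_mul, smul_eq_mul, ← add_mul, Int.mul_ediv_cancel _ hd0]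
      have h2 : (k • (d:ℤ)) / d = k := by
        rw [smul_eq_mul, Int.mul_ediv_cancel _ hd0]
      have h3 : (k' • (d:ℤ)) / d = k' := by
        rw [smul_eq_mul, Int.mul_ediv_cancel _ hd0]
      show QuotientAddGroup.mk' K ((x, k • (d:ℤ)) + (x', k' • (d:ℤ))).1
          - ((((x, k • (d:ℤ)) + (x', k' • (d:ℤ))).2) / d) • q = _
      rw [Prod.fst_add, Prod.snd_add, map_add, h1, add_zsmul]
      dsimp only
      rw [h2, h3]
      abel

lemma mkHhom_surjective (K : AddSubgroup A) (d : ℕ) (q : A ⧸ K) :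
    Function.Surjective (mkHhom K d q) := by
  intro x
  induction x using QuotientAddGroup.induction_on with
  | H x => exact ⟨⟨(x, 0), trivial, ⟨0, by simp⟩⟩, by simp [mkHhom]⟩

lemma mkHhom_ker (K : AddSubgroup A) {d : ℕ} (hd : 0 < d) (q : A ⧸ K) :
    (mkHhom K d q).ker = (mkH K d q).addSubgroupOf _ := by
  have hd0 : (d : ℤ) ≠ 0 := by exact_mod_cast hd.ne'
  ext z
  obtain ⟨⟨x, y⟩, -, k, hk⟩ := z
  simp only at hk
  subst hk
  have h2 : (k • (d:ℤ)) / d = k := by rw [smul_eq_mul, Int.mul_ediv_cancel _ hd0]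
  rw [AddMonoidHom.mem_ker, mem_addSubgroupOf]
  constructor
  · intro h
    replace h : QuotientAddGroup.mk' K x - ((k • (d:ℤ)) / d) • q = 0 := h
    rw [h2, sub_eq_zero] at h
    exact ⟨k, rfl, h⟩
  · rintro ⟨t, ht, hq⟩
    have htk : t = k := by
      dsimp only at ht
      rw [smul_eq_mul] at ht
      exact mul_right_cancel₀ hd0 ht.symm
    subst htk
    show QuotientAddGroup.mk' K x - ((t • (d:ℤ)) / d) • q = 0
    rw [h2, sub_eq_zero]
    exact hq

lemma index_mkH (K : AddSubgroup A) {d : ℕ} (hd : 0 < d) (q : A ⧸ K) :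
    (mkH K d q).index = d * K.index := by
  have h1 := relIndex_mul_index (mkH_le_prod (K := K) (d := d) (q := q))
  have h2 : ((⊤ : AddSubgroup A).prod (zmultiples (d : ℤ))).index = d := by
    rw [index_prod, index_top, one_mul, Int.index_zmultiples, Int.natAbs_natCast]
  have h3 : (mkH K d q).relIndex ((⊤ : AddSubgroup A).prod (zmultiples (d : ℤ))) = K.index := by
    rw [relIndex, index_eq_card, ← mkHhom_ker K hd q, index_eq_card]
    · exact Nat.card_congr (QuotientAddGroup.quotientKerEquivOfSurjective _
        (mkHhom_surjective K d q)).toEquiv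
  rw [← h1, h3, h2, mul_comm]

lemma zmultiples_neg' (a : ℤ) : zmultiples (-a) = zmultiples a := by
  ext x
  simp only [mem_zmultiples_iff]
  constructor
  · rintro ⟨k, rfl⟩; exact ⟨-k, by simp⟩
  · rintro ⟨k, rfl⟩; exact ⟨-k, by simp⟩

lemma int_subgroup_eq_zmultiples_nat (S : AddSubgroup ℤ) : ∃ d : ℕ, S = zmultiples (d : ℤ) := by
  obtain ⟨a, ha⟩ := Int.subgroup_cyclic S
  refine ⟨a.natAbs, ?_⟩
  rw [ha, ← zmultiples_eq_closure]
  rcases Int.natAbs_eq a with h | h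
  · rw [← h]
  · conv_lhs => rw [h]
    rw [zmultiples_neg']

lemma map_snd_mkH (K : AddSubgroup A) (d : ℕ) (q : A ⧸ K) :
    (mkH K d q).map (AddMonoidHom.snd A ℤ) = zmultiples (d : ℤ) := by
  ext y
  simp only [mem_map, mem_zmultiples_iff]
  constructor
  · rintro ⟨⟨x, y⟩, ⟨t, ht, -⟩, rfl⟩
    exact ⟨t, by rw [smul_eq_mul]; exact ht.symm⟩
  · rintro ⟨t, rfl⟩
    obtain ⟨x, hx⟩ := QuotientAddGroup.mk'_surjective K (t • q)
    exact ⟨(x, t * d), ⟨t, rfl, hx⟩, by simp [smul_eq_mul]⟩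

lemma comap_inl_mkH (K : AddSubgroup A) {d : ℕ} (hd : 0 < d) (q : A ⧸ K) :
    (mkH K d q).comap (AddMonoidHom.inl A ℤ) = K := by
  have hd0 : (d : ℤ) ≠ 0 := by exact_mod_cast hd.ne'
  ext x
  rw [mem_comap]
  constructor
  · rintro ⟨t, ht, hq⟩
    have ht0 : t = 0 := by
      have ht' : (0 : ℤ) = t * (d : ℤ) := ht
      rcases mul_eq_zero.mp ht'.symm with h | h
      · exact h
      · exact absurd h hd0
    subst ht0
    rw [zero_zsmul] at hq
    rwa [← QuotientAddGroup.ker_mk' K, AddMonoidHom.mem_ker]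
  · intro hx
    refine ⟨0, by simp, ?_⟩
    rw [zero_zsmul]
    rwa [← AddMonoidHom.mem_ker, QuotientAddGroup.ker_mk' K]

lemma mk'_eq_of_mem_mkH {K : AddSubgroup A} {d : ℕ} (hd : 0 < d) {q : A ⧸ K} {x : A}
    (h : (x, (d : ℤ)) ∈ mkH K d q) : QuotientAddGroup.mk' K x = q := by
  have hd0 : (d : ℤ) ≠ 0 := by exact_mod_cast hd.ne'
  obtain ⟨t, ht, hq⟩ := h
  have : t = 1 := by
    have : (1 : ℤ) * d = t * d := by rw [one_mul]; exact ht
    exact (mul_right_cancel₀ hd0 this).symm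
  subst this
  rwa [one_zsmul] at hq

/-- Every finite-index subgroup of `A × ℤ` is of the form `mkH K d q`. -/
lemma exists_mkH (H : AddSubgroup (A × ℤ)) (hH : H.index ≠ 0) :
    ∃ (d : ℕ) (K : AddSubgroup A) (q : A ⧸ K), 0 < d ∧ H = mkH K d q := by
  obtain ⟨d, hS⟩ := int_subgroup_eq_zmultiples_nat (H.map (AddMonoidHom.snd A ℤ))
  have hd : 0 < d := by
    rcases Nat.eq_zero_or_pos d with rfl | h
    · exfalso
      apply hH
      have hle : H ≤ (⊤ : AddSubgroup A).prod (zmultiples ((0 : ℕ) : ℤ)) := by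
        intro z hz
        exact ⟨trivial, by rw [← hS]; exact ⟨z, hz, rfl⟩⟩
      have := index_dvd_of_le hle
      rw [index_prod, index_top, one_mul] at this
      simpa [Int.index_zmultiples] using Nat.eq_zero_of_zero_dvd (by simpa using this)
    · exact h
  set K := H.comap (AddMonoidHom.inl A ℤ) with hK
  have hdS : ((d : ℤ)) ∈ H.map (AddMonoidHom.snd A ℤ) := by
    rw [hS]; exact ⟨1, one_zsmul _⟩
  obtain ⟨⟨x, y⟩, hxy, hy⟩ := hdS
  have hy' : y = (d : ℤ) := hy
  subst hy' 
  refine ⟨d, K, QuotientAddGroup.mk' K x, hd, ?_⟩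
  ext ⟨u, v⟩
  constructor
  · intro hu
    have hv : v ∈ zmultiples ((d : ℕ) : ℤ) := by rw [← hS]; exact ⟨(u, v), hu, rfl⟩
    obtain ⟨t, ht⟩ := hv
    have ht' : t • (d : ℤ) = v := ht
    refine ⟨t, ?_, ?_⟩
    · show v = t * (d : ℤ)
      rw [← ht', smul_eq_mul]
    have hmem : (u - t • x, (0 : ℤ)) ∈ H := by
      have h2 : (u, v) - t • (x, (d : ℤ)) ∈ H := sub_mem hu (zsmul_mem hxy t)
      have : ((u, v) - t • (x, (d : ℤ))) = (u - t • x, v - t • d) := rfl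
      rw [this] at h2
      have hv0 : v - t • (d : ℤ) = 0 := by rw [← ht', sub_self]
      rwa [hv0] at h2
    have : u - t • x ∈ K := hmem
    have h0 : QuotientAddGroup.mk' K (u - t • x) = 0 := by
      rwa [← AddMonoidHom.mem_ker, QuotientAddGroup.ker_mk' K]
    rw [map_sub, sub_eq_zero] at h0
    rw [h0, map_zsmul]
  · rintro ⟨t, hv, hq⟩
    have hv' : v = t * (d : ℤ) := hv
    have hq' : QuotientAddGroup.mk' K u = t • QuotientAddGroup.mk' K x := hq
    have h0 : QuotientAddGroup.mk' K (u - t • x) = 0 := by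
      rw [map_sub, map_zsmul, sub_eq_zero, hq']
    have hmem : (u - t • x, (0 : ℤ)) ∈ H := by
      rwa [← AddMonoidHom.mem_ker, QuotientAddGroup.ker_mk' K] at h0
    have h2 : (u - t • x, (0 : ℤ)) + t • (x, (d : ℤ)) ∈ H := add_mem hmem (zsmul_mem hxy t)
    have h3 : ((u - t • x, (0 : ℤ)) + t • (x, (d : ℤ))) = (u, t * d) := by
      ext
      · show u - t • x + t • x = u
        abel
      · show (0 : ℤ) + t • (d : ℤ) = t * d
        rw [zero_add, smul_eq_mul]
    rw [h3] at h2
    rwa [hv']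

variable (A) in
/-- Classifying data for subgroups of `A × ℤ` of index `m`. -/
def ReprData (m : ℕ) : Type _ :=
  Σ D : {D : ℕ // D ∈ m.divisors}, Σ K : {K : AddSubgroup A // K.index = m / D.val}, A ⧸ K.val

noncomputable def reprEquiv (m : ℕ) (hm : m ≠ 0) :
    ReprData A m ≃ {H : AddSubgroup (A × ℤ) // H.index = m} := by
  refine Equiv.ofBijective (fun a => ⟨mkH a.2.1.val a.1.val a.2.2, ?_⟩) ⟨?_, ?_⟩
  · obtain ⟨hdvd, -⟩ := Nat.mem_divisors.mp a.1.prop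
    rw [index_mkH _ (Nat.pos_of_mem_divisors a.1.prop), a.2.1.prop, Nat.mul_div_cancel' hdvd]
  · rintro ⟨⟨D, hD⟩, ⟨K, hK⟩, q⟩ ⟨⟨D', hD'⟩, ⟨K', hK'⟩, q'⟩ h
    simp only [Subtype.mk.injEq] at h
    have hpos : 0 < D := Nat.pos_of_mem_divisors hD
    have hDD : D = D' := by
      have h2 := congrArg (fun S => (AddSubgroup.map (AddMonoidHom.snd A ℤ) S).index) h
      simpa [map_snd_mkH, Int.index_zmultiples] using h2
    subst hDD
    have hKK : K = K' := by
      rw [← comap_inl_mkH K hpos q, ← comap_inl_mkH K' hpos q', h]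
    subst hKK
    have hqq : q = q' := by
      obtain ⟨x, hx⟩ := QuotientAddGroup.mk'_surjective K q
      have hmem : (x, (D : ℤ)) ∈ mkH K D q := ⟨1, by rw [one_mul], by rw [one_zsmul, hx]⟩
      rw [h] at hmem
      have := mk'_eq_of_mem_mkH hpos hmem
      rw [hx] at this
      exact this
    subst hqq
    rfl
  · rintro ⟨H, hHm⟩
    have hne : H.index ≠ 0 := by rw [hHm]; exact hm
    obtain ⟨d, K, q, hd, hHe⟩ := exists_mkH H hne
    have hmi : d * K.index = m := by rw [← index_mkH K hd q, ← hHe, hHm]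
    have hdvd : d ∣ m := Dvd.intro _ hmi
    have hKval : K.index = m / d := by
      rw [← hmi, Nat.mul_div_cancel_left _ hd]
    exact ⟨⟨⟨d, Nat.mem_divisors.mpr ⟨hdvd, hm⟩⟩, ⟨K, hKval⟩, q⟩, Subtype.ext hHe.symm⟩

lemma card_sigma_aux {ι : Type*} [Fintype ι] (π : ι → Type*) [∀ i, Finite (π i)] :
    Nat.card (Σ i, π i) = ∑ i, Nat.card (π i) := by
  haveI := fun i => Fintype.ofFinite (π i)
  simp [Nat.card_eq_fintype_card, Fintype.card_sigma]

lemma step (m : ℕ) (hm : m ≠ 0)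
    (hfin : ∀ e : ℕ, e ∣ m → Finite {K : AddSubgroup A // K.index = e}) :
    Finite {H : AddSubgroup (A × ℤ) // H.index = m} ∧
    Nat.card {H : AddSubgroup (A × ℤ) // H.index = m}
      = ∑ D ∈ m.divisors, Nat.card {K : AddSubgroup A // K.index = m / D} * (m / D) := by
  haveI hTK : ∀ D : {D : ℕ // D ∈ m.divisors},
      Finite {K : AddSubgroup A // K.index = m / D.val} := fun D =>
    hfin _ (Nat.div_dvd_of_dvd (Nat.mem_divisors.mp D.prop).1)
  have hDne : ∀ D : {D : ℕ // D ∈ m.divisors}, m / D.val ≠ 0 := fun D => by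
    obtain ⟨hdvd, -⟩ := Nat.mem_divisors.mp D.prop
    exact fun h => hm (by rw [← Nat.div_mul_cancel hdvd, h, zero_mul])
  haveI hQfin : ∀ (D : {D : ℕ // D ∈ m.divisors}) (K : {K : AddSubgroup A // K.index = m / D.val}),
      Finite (A ⧸ K.val) := fun D K => by
    apply Nat.finite_of_card_ne_zero
    rw [← index_eq_card, K.prop]
    exact hDne D
  have hfin' : Finite (ReprData A m) := by
    unfold ReprData
    infer_instance
  have hfinH : Finite {H : AddSubgroup (A × ℤ) // H.index = m} :=
    Finite.of_equiv _ (reprEquiv m hm)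
  refine ⟨hfinH, ?_⟩
  rw [← Nat.card_congr (reprEquiv (A := A) m hm)]
  unfold ReprData
  rw [card_sigma_aux]
  have hinner : ∀ D : {D : ℕ // D ∈ m.divisors},
      Nat.card (Σ K : {K : AddSubgroup A // K.index = m / D.val}, A ⧸ K.val)
        = Nat.card {K : AddSubgroup A // K.index = m / D.val} * (m / D.val) := by
    intro D
    haveI := Fintype.ofFinite {K : AddSubgroup A // K.index = m / D.val}
    rw [card_sigma_aux]
    have : ∀ K : {K : AddSubgroup A // K.index = m / D.val},
        Nat.card (A ⧸ K.val) = m / D.val := fun K => by rw [← index_eq_card, K.prop]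
    rw [Finset.sum_congr rfl (fun K _ => this K), Finset.sum_const, Finset.card_univ,
      Nat.card_eq_fintype_card, smul_eq_mul]
  rw [Finset.sum_congr rfl (fun D _ => hinner D)]
  exact Finset.sum_coe_sort m.divisors
    (fun D => Nat.card {K : AddSubgroup A // K.index = m / D} * (m / D))

/-- Transporting subgroups of given index along an isomorphism. -/
def subgroupIndexEquiv {G G' : Type*} [AddGroup G] [AddGroup G'] (e : G ≃+ G') (m : ℕ) :
    {H : AddSubgroup G // H.index = m} ≃ {H : AddSubgroup G' // H.index = m} where
  toFun H := ⟨H.val.map e.toAddMonoidHom, by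
    have hker : (e.toAddMonoidHom : G →+ G').ker = ⊥ :=
      (AddMonoidHom.ker_eq_bot_iff _).mpr e.injective
    rw [index_map_eq _ e.surjective (hker ▸ bot_le), H.prop]⟩
  invFun H := ⟨H.val.map e.symm.toAddMonoidHom, by
    have hker : (e.symm.toAddMonoidHom : G' →+ G).ker = ⊥ :=
      (AddMonoidHom.ker_eq_bot_iff _).mpr e.symm.injective
    rw [index_map_eq _ e.symm.surjective (hker ▸ bot_le), H.prop]⟩
  left_inv H := Subtype.ext (by
    show map e.symm.toAddMonoidHom (map e.toAddMonoidHom H.val) = H.val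
    rw [map_map]
    convert map_id H.val
    ext x
    simp)
  right_inv H := Subtype.ext (by
    show map e.toAddMonoidHom (map e.symm.toAddMonoidHom H.val) = H.val
    rw [map_map]
    convert map_id H.val
    ext x
    simp)

lemma card_base {G : Type*} [AddGroup G] [Subsingleton G] (m : ℕ) :
    Finite {H : AddSubgroup G // H.index = m} ∧
    Nat.card {H : AddSubgroup G // H.index = m} = if m = 1 then 1 else 0 := by
  have hH : ∀ H : AddSubgroup G, H = ⊤ := fun H => by
    ext x
    have hx : x = 0 := Subsingleton.elim x 0
    subst hx
    simp only [AddSubgroup.mem_top, iff_true]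
    exact zero_mem H
  have hidx : ∀ H : AddSubgroup G, H.index = 1 := fun H => by rw [hH H, index_top]
  rcases eq_or_ne m 1 with rfl | hm
  · haveI : Unique {H : AddSubgroup G // H.index = 1} :=
      { default := ⟨⊤, index_top⟩
        uniq := fun a => Subtype.ext ((hH a.val).trans (hH ⊤).symm) }
    simp [Nat.card_unique]
    exact Finite.of_fintype _
  · haveI : IsEmpty {H : AddSubgroup G // H.index = m} :=
      ⟨fun a => hm (a.prop ▸ hidx a.val)⟩
    simp [Nat.card_of_isEmpty, hm]
    exact Finite.of_fintype _

/-- The additive equivalence `ℤ^(n+1) ≃ ℤ^n × ℤ`. -/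
def piSuccAddEquiv (n : ℕ) : (Fin (n + 1) → ℤ) ≃+ (Fin n → ℤ) × ℤ where
  toFun f := (fun i => f i.castSucc, f (Fin.last n))
  invFun x := Fin.snoc x.1 x.2
  left_inv f := by
    funext i
    induction i using Fin.lastCases with
    | last => simp
    | cast i => simp
  right_inv x := by
    ext i
    · simp
    · simp
  map_add' f g := rfl

/-- The Gaussian-binomial-type polynomials counting sublattices. -/
noncomputable def Pg : ℕ → ℕ → Polynomial ℕ
  | 0, k => if k = 0 then 1 else 0
  | n + 1, k => ∑ j ∈ Finset.range (k + 1), Polynomial.X ^ j * Pg n j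

theorem main (n : ℕ) (p : ℕ) (hp : p.Prime) (k : ℕ) :
    Finite {H : AddSubgroup (Fin n → ℤ) // H.index = p ^ k} ∧
    Nat.card {H : AddSubgroup (Fin n → ℤ) // H.index = p ^ k} = (Pg n k).eval p := by
  induction n generalizing k with
  | zero =>
    obtain ⟨hfin, hcard⟩ := card_base (G := Fin 0 → ℤ) (p ^ k)
    refine ⟨hfin, ?_⟩
    rw [hcard, Pg]
    rcases eq_or_ne k 0 with rfl | hk
    · simp
    · have : p ^ k ≠ 1 := Nat.one_lt_pow hk hp.one_lt |>.ne'
      simp [this, hk, hp.ne_one]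
  | succ n ih =>
    have hm : p ^ k ≠ 0 := pow_ne_zero _ hp.pos.ne'
    have hfin : ∀ e : ℕ, e ∣ p ^ k → Finite {K : AddSubgroup (Fin n → ℤ) // K.index = e} := by
      intro e he
      obtain ⟨j, hj, rfl⟩ := (Nat.dvd_prime_pow hp).mp he
      exact (ih j).1
    obtain ⟨hfinP, hcard⟩ := step (A := Fin n → ℤ) (p ^ k) hm hfin
    have E := subgroupIndexEquiv (piSuccAddEquiv n) (p ^ k)
    constructor
    · exact Finite.of_equiv _ E.symm
    · rw [Nat.card_congr E, hcard, Nat.divisors_prime_pow hp, Finset.sum_map]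
      have hterm : ∀ i ∈ Finset.range (k + 1),
          Nat.card {K : AddSubgroup (Fin n → ℤ) // K.index = p ^ k / (⟨(p ^ ·), Nat.pow_right_injective hp.two_le⟩ : ℕ ↪ ℕ) i}
            * (p ^ k / (⟨(p ^ ·), Nat.pow_right_injective hp.two_le⟩ : ℕ ↪ ℕ) i)
          = (Pg n (k - i)).eval p * p ^ (k - i) := by
        intro i hi
        have hik : i ≤ k := Nat.lt_succ_iff.mp (Finset.mem_range.mp hi)
        have hdiv : p ^ k / p ^ i = p ^ (k - i) := Nat.pow_div hik hp.pos
        simp only [Function.Embedding.coeFn_mk, hdiv, (ih (k - i)).2]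
      rw [Finset.sum_congr rfl hterm]
      have hrefl := Finset.sum_range_reflect (fun j => (Pg n j).eval p * p ^ j) (k + 1)
      simp only [Nat.add_sub_cancel] at hrefl
      rw [hrefl, Pg]
      rw [Polynomial.eval_finset_sum]
      refine Finset.sum_congr rfl fun j _ => ?_
      rw [Polynomial.eval_mul, Polynomial.eval_pow, Polynomial.eval_X, mul_comm]

end SublatticeAux


/-- For fixed `n ≥ 1` and `k`, the number of subgroups of `ℤ^n` of index `p^k`, as a
function of the prime `p`, is a polynomial in `p` with nonnegative integer coefficients
(the Gaussian binomial polynomial `[n+k-1 choose k]_q` evaluated at `q = p`). -/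
theorem sublattice_count_prime_pow_polynomial (n k : ℕ) (hn : 1 ≤ n) :
    ∃ P : Polynomial ℕ, ∀ p : ℕ, p.Prime →
      sublatticeCount n (p ^ k) = P.eval p := by
  exact ⟨SublatticeAux.Pg n k, fun p hp => (SublatticeAux.main n p hp k).2⟩
end
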